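/- Let τ > 0 and θ ∈ [0, π), and let T be the real 4×4 matrix with rows: (1, 0, −1/τ, 0); (0, 0, 0, 0); (τ sin²θ, τ cosθ sinθ, −sin²θ, −cosθ sinθ); (−τ cosθ sinθ, −τ cos²θ, cosθ sinθ, cos²θ). Then the spectral radius of T (i.e., the maximum of the absolute values of the complex eigenvalues of T) equals |cos θ|; in particular it is independent of τ. -/

import Mathlib

/-- The spectral radius (maximum modulus of the complex eigenvalues) of the Chambolle–Pock
matrix for two lines at angle `θ` with parameter `τ` equals `|cos θ|`, independently of `τ`. -/
theorem stmt_16 (τ θ : ℝ) (hτ : 0 < τ) (hθ : θ ∈ Set.Ico 0 Real.pi) :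
    IsGreatest {r : ℝ | ∃ μ ∈ spectrum ℂ
        ((!![1, 0, -1/τ, 0;
             0, 0, 0, 0;
             τ * Real.sin θ ^ 2, τ * Real.cos θ * Real.sin θ,
               -(Real.sin θ ^ 2), -(Real.cos θ * Real.sin θ);
             -(τ * Real.cos θ * Real.sin θ), -(τ * Real.cos θ ^ 2),
               Real.cos θ * Real.sin θ, Real.cos θ ^ 2] :
            Matrix (Fin 4) (Fin 4) ℝ).map Complex.ofReal),
        r = ‖μ‖}
      |Real.cos θ| := by
  set c := Real.cos θ with hc
  set s := Real.sin θ with hs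
  set M : Matrix (Fin 4) (Fin 4) ℂ :=
      ((!![1, 0, -1/τ, 0;
             0, 0, 0, 0;
             τ * s ^ 2, τ * c * s, -(s ^ 2), -(c * s);
             -(τ * c * s), -(τ * c ^ 2), c * s, c ^ 2] :
            Matrix (Fin 4) (Fin 4) ℝ).map Complex.ofReal) with hM
  have h1 : (s:ℂ)^2 + (c:ℂ)^2 = 1 := by exact_mod_cast Real.sin_sq_add_cos_sq θ
  have htz : (τ:ℂ) ≠ 0 := by exact_mod_cast hτ.ne'
  set a : ℂ := (c:ℂ)^2 + (c:ℂ)*(s:ℂ)*Complex.I with ha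
  set b : ℂ := (c:ℂ)^2 - (c:ℂ)*(s:ℂ)*Complex.I with hb
  have habs1 : ‖(c:ℂ) + (s:ℂ)*Complex.I‖ = 1 := by
    rw [Complex.norm_add_mul_I]
    rw [show c^2 + s^2 = 1 by linarith [Real.sin_sq_add_cos_sq θ]]
    exact Real.sqrt_one
  have habs1' : ‖(c:ℂ) + (-s:ℝ)*Complex.I‖ = 1 := by
    rw [Complex.norm_add_mul_I]
    rw [show c^2 + (-s)^2 = 1 by nlinarith [Real.sin_sq_add_cos_sq θ]]
    exact Real.sqrt_one
  have habsa : ‖a‖ = |c| := by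
    have : a = (c:ℂ) * ((c:ℂ) + (s:ℂ)*Complex.I) := by rw [ha]; ring
    rw [this, norm_mul, Complex.norm_real, Real.norm_eq_abs, habs1, mul_one]
  have habsb : ‖b‖ = |c| := by
    have : b = (c:ℂ) * ((c:ℂ) + (-s:ℝ)*Complex.I) := by rw [hb]; push_cast; ring
    rw [this, norm_mul, Complex.norm_real, Real.norm_eq_abs, habs1', mul_one]
  have hdet : ∀ μ : ℂ, ((algebraMap ℂ (Matrix (Fin 4) (Fin 4) ℂ) μ) - M).det
      = μ^2 * (μ - a) * (μ - b) := by
    intro μ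
    have hE : (algebraMap ℂ (Matrix (Fin 4) (Fin 4) ℂ) μ) - M
        = !![μ - 1, 0, (1:ℂ)/τ, 0;
             0, μ, 0, 0;
             -((τ:ℂ) * s ^ 2), -((τ:ℂ) * c * s), μ + (s:ℂ) ^ 2, (c:ℂ) * s;
             (τ:ℂ) * c * s, (τ:ℂ) * c ^ 2, -((c:ℂ) * s), μ - (c:ℂ) ^ 2] := by
      rw [hM]
      ext i j
      fin_cases i <;> fin_cases j <;>
        simp [Matrix.algebraMap_eq_diagonal, Matrix.diagonal_apply] <;> push_cast <;> ring
    have hfact : μ^2 * (μ - a) * (μ - b)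
        = μ^2 * (μ^2 - 2*(c:ℂ)^2*μ + (c:ℂ)^2) := by
      rw [ha, hb]
      linear_combination (-(μ^2*(c:ℂ)^2*(s:ℂ)^2)) * Complex.I_sq + (μ^2*(c:ℂ)^2) * h1
    rw [hE, hfact]
    simp [Matrix.det_succ_row_zero, Fin.sum_univ_succ, Matrix.det_fin_three,
      Fin.succAbove, Matrix.cons_val_succ]
    field_simp
    linear_combination μ^3 * h1
  have hspec : ∀ μ : ℂ, μ ∈ spectrum ℂ M ↔ μ^2 * (μ - a) * (μ - b) = 0 := by
    intro μ
    rw [spectrum.mem_iff, Matrix.isUnit_iff_isUnit_det, isUnit_iff_ne_zero, not_not, hdet]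
  constructor
  · exact ⟨a, (hspec a).mpr (by simp), habsa.symm⟩
  · rintro r ⟨μ, hμ, rfl⟩
    rcases mul_eq_zero.mp ((hspec μ).mp hμ) with h | h
    · rcases mul_eq_zero.mp h with h | h
      · have : μ = 0 := by
          have := pow_eq_zero_iff (n := 2) (by norm_num) |>.mp h
          exact this
        simp [this]
      · rw [sub_eq_zero.mp h, habsa]
    · rw [sub_eq_zero.mp h, habsb]
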